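/- Let n and d be positive integers, let G be a game graph with n nodes and priorities up to d, and let A be a deterministic PG separator with input alphabet Σ_{n,d} (for every state s and letter e there is exactly one transition (s,e,p,s') ∈ Δ). Then Even has a winning strategy in G if and only if Even has a winning strategy in the synchronized product G×A. -/

import Mathlib

namespace PGSep

/-- Letters of the alphabet `Σ_{n,d}`: triples (source node, priority, target node). -/
abbrev Letter : Type := ℕ × ℕ × ℕ

/-- The priority component of a letter. -/
def prio (e : Letter) : ℕ := e.2.1

/-- Membership in the alphabet `Σ_{n,d} = {1,…,n} × {1,…,d} × {1,…,n}`. -/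
def InAlph (n d : ℕ) (e : Letter) : Prop :=
  1 ≤ e.1 ∧ e.1 ≤ n ∧ 1 ≤ e.2.1 ∧ e.2.1 ≤ d ∧ 1 ≤ e.2.2 ∧ e.2.2 ≤ n

/-- Infinite words over the alphabet. -/
abbrev Word : Type := ℕ → Letter

/-- `p` occurs infinitely often among the values of `f`. -/
def InfOft (f : ℕ → ℕ) (p : ℕ) : Prop := ∀ N, ∃ k, N ≤ k ∧ f k = p

/-- The largest value occurring infinitely often in `f` exists and is even. -/
def MaxInfOftEven (f : ℕ → ℕ) : Prop :=
  ∃ p, Even p ∧ InfOft f p ∧ ∀ q, InfOft f q → q ≤ p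

/-- The largest value occurring infinitely often in `f` exists and is odd. -/
def MaxInfOftOdd (f : ℕ → ℕ) : Prop :=
  ∃ p, Odd p ∧ InfOft f p ∧ ∀ q, InfOft f q → q ≤ p

/-- `LimsupEven_{n,d}`: the largest priority occurring infinitely often is even. -/
def LimsupEven (w : Word) : Prop := MaxInfOftEven fun k => prio (w k)

/-- `LimsupOdd_{n,d}`: the largest priority occurring infinitely often is odd. -/
def LimsupOdd (w : Word) : Prop := MaxInfOftOdd fun k => prio (w k)

/-- An infinite sequence of triples is a path in the edge set `E`. -/
def IsPathSeq {V : Type*} (E : Set (V × ℕ × V)) (w : ℕ → V × ℕ × V) : Prop :=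
  ∀ k, w k ∈ E ∧ (w k).2.2 = (w (k + 1)).1

/-- A game graph with `n` nodes (the set {1,…,n}) and priorities up to `d`. -/
structure GameGraph (n d : ℕ) where
  /-- nodes owned by Even (V_□) -/
  evenN : Set ℕ
  /-- nodes owned by Odd (V_△) -/
  oddN : Set ℕ
  /-- the starting node -/
  start : ℕ
  /-- the set of edges (a subset of the alphabet) -/
  edges : Set Letter
  union_eq : evenN ∪ oddN = Set.Icc 1 n
  disj : Disjoint evenN oddN
  start_mem : start ∈ Set.Icc 1 n
  edges_alph : ∀ e ∈ edges, InAlph n d e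
  total : ∀ v ∈ Set.Icc (1 : ℕ) n, ∃ e ∈ edges, e.1 = v

/-- A play in a game graph: an infinite path starting at the starting node,
identified with the word listing its consecutive edges. -/
def IsPlay {n d : ℕ} (G : GameGraph n d) (w : Word) : Prop :=
  (w 0).1 = G.start ∧ IsPathSeq G.edges w

/-- A positional strategy for Even: one outgoing edge for each node of `V_□`. -/
structure EPosStrat {n d : ℕ} (G : GameGraph n d) where
  choice : ℕ → Letter
  mem : ∀ v ∈ G.evenN, choice v ∈ G.edges ∧ (choice v).1 = v

/-- A positional strategy for Odd: one outgoing edge for each node of `V_△`. -/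
structure OPosStrat {n d : ℕ} (G : GameGraph n d) where
  choice : ℕ → Letter
  mem : ∀ v ∈ G.oddN, choice v ∈ G.edges ∧ (choice v).1 = v

/-- A play arises from a positional strategy of Even. -/
def ArisesE {n d : ℕ} {G : GameGraph n d} (τ : EPosStrat G) (w : Word) : Prop :=
  IsPlay G w ∧ ∀ k, (w k).1 ∈ G.evenN → w k = τ.choice (w k).1

/-- A play arises from a positional strategy of Odd. -/
def ArisesO {n d : ℕ} {G : GameGraph n d} (τ : OPosStrat G) (w : Word) : Prop :=
  IsPlay G w ∧ ∀ k, (w k).1 ∈ G.oddN → w k = τ.choice (w k).1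

/-- A positional strategy for Even is winning: every arising play is won by Even. -/
def EWinningPos {n d : ℕ} {G : GameGraph n d} (τ : EPosStrat G) : Prop :=
  ∀ w, ArisesE τ w → LimsupEven w

/-- A positional strategy for Odd is winning: every arising play is won by Odd
(i.e. not won by Even). -/
def OWinningPos {n d : ℕ} {G : GameGraph n d} (τ : OPosStrat G) : Prop :=
  ∀ w, ArisesO τ w → ¬ LimsupEven w

/-- `PosEven_{n,d}`: plays arising from positional winning strategies for Even. -/
def PosEven (n d : ℕ) : Set Word :=
  {w | ∃ G : GameGraph n d, ∃ τ : EPosStrat G, EWinningPos τ ∧ ArisesE τ w}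

/-- `PosOdd_{n,d}`: plays arising from positional winning strategies for Odd. -/
def PosOdd (n d : ℕ) : Set Word :=
  {w | ∃ G : GameGraph n d, ∃ τ : OPosStrat G, OWinningPos τ ∧ ArisesO τ w}

/-- A nondeterministic automaton reading letters, with state space `Q`. -/
structure Automaton (Q : Type*) where
  init : Q
  trans : Set (Q × Letter × ℕ × Q)

/-- Transitions: (source state, letter, emitted priority, target state). -/
abbrev Trans (Q : Type*) : Type _ := Q × Letter × ℕ × Q

def tSrc {Q : Type*} (t : Trans Q) : Q := t.1
def tLetter {Q : Type*} (t : Trans Q) : Letter := t.2.1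
def tPrio {Q : Type*} (t : Trans Q) : ℕ := t.2.2.1
def tTgt {Q : Type*} (t : Trans Q) : Q := t.2.2.2

/-- `A` is a (total) nondeterministic parity automaton over `Σ_{n,d}` with
transition priorities in `{1,…,d'}`. -/
def IsParityAutomaton (n d d' : ℕ) {Q : Type*} (A : Automaton Q) : Prop :=
  (∀ t ∈ A.trans, InAlph n d (tLetter t) ∧ 1 ≤ tPrio t ∧ tPrio t ≤ d') ∧
  (∀ (s : Q) (e : Letter), InAlph n d e → ∃ p s', (s, e, p, s') ∈ A.trans)

/-- A run of the automaton: an infinite path of transitions starting at `init`. -/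
def IsRun {Q : Type*} (A : Automaton Q) (ρ : ℕ → Trans Q) : Prop :=
  tSrc (ρ 0) = A.init ∧ ∀ k, ρ k ∈ A.trans ∧ tTgt (ρ k) = tSrc (ρ (k + 1))

/-- The run `ρ` reads the word `w`. -/
def Reads {Q : Type*} (ρ : ℕ → Trans Q) (w : Word) : Prop := ∀ k, tLetter (ρ k) = w k

/-- A run is accepting: the largest priority labelling infinitely many
of its transitions is even. -/
def Accepting {Q : Type*} (ρ : ℕ → Trans Q) : Prop := MaxInfOftEven fun k => tPrio (ρ k)

/-- The language of the automaton. -/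
def Lang {Q : Type*} (A : Automaton Q) : Set Word :=
  {w | ∃ ρ, IsRun A ρ ∧ Reads ρ w ∧ Accepting ρ}

/-- A transition strategy for `A`, resolving nondeterminism based on the word read
so far, the current state, and the next letter. -/
structure TransStrat (n d : ℕ) {Q : Type*} (A : Automaton Q) where
  app : List Letter → Q → Letter → Trans Q
  valid : ∀ w s e, InAlph n d e →
    app w s e ∈ A.trans ∧ tSrc (app w s e) = s ∧ tLetter (app w s e) = e

/-- The state reached after reading the first `k` letters of `w` following `σ`. -/
def stateAt {n d : ℕ} {Q : Type*} (A : Automaton Q) (σ : TransStrat n d A) (w : Word) :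
    ℕ → Q
  | 0 => A.init
  | k + 1 => tTgt (σ.app ((List.range k).map w) (stateAt A σ w k) (w k))

/-- The run obtained by following the transition strategy `σ` while reading `w`. -/
def followRun {n d : ℕ} {Q : Type*} (A : Automaton Q) (σ : TransStrat n d A) (w : Word)
    (k : ℕ) : Trans Q :=
  σ.app ((List.range k).map w) (stateAt A σ w k) (w k)

/-- The transition strategy `σ` is winning for the set of words `L`. -/
def WinningFor {n d : ℕ} {Q : Type*} (A : Automaton Q) (σ : TransStrat n d A)
    (L : Set Word) : Prop :=
  ∀ w ∈ L, Accepting (followRun A σ w)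

/-- `A` is good for games: some transition strategy is winning for the whole `L(A)`. -/
def GFG (n d : ℕ) {Q : Type*} (A : Automaton Q) : Prop :=
  ∃ σ : TransStrat n d A, WinningFor A σ (Lang A)

/-- `A` is a parity-games separator. -/
def PGSeparator (n d : ℕ) {Q : Type*} (A : Automaton Q) : Prop :=
  (∀ w ∈ PosEven n d, w ∈ Lang A) ∧ ∀ w ∈ PosOdd n d, w ∉ Lang A

/-- `A` is a strong PG separator: additionally it rejects all of `LimsupOdd`. -/
def StrongPGSeparator (n d : ℕ) {Q : Type*} (A : Automaton Q) : Prop :=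
  PGSeparator n d A ∧ ∀ w : Word, LimsupOdd w → w ∉ Lang A

/-- `A` is suitable for parity games (SFPG). -/
def SFPG (n d : ℕ) {Q : Type*} (A : Automaton Q) : Prop :=
  PGSeparator n d A ∧
  ∀ (G : GameGraph n d) (τ : EPosStrat G), EWinningPos τ →
    ∃ σ : TransStrat n d A, WinningFor A σ {w | ArisesE τ w}

/-- A generic game with parity winning condition, over an arbitrary set of nodes. -/
structure PGame (V : Type*) where
  evenOwn : V → Prop
  start : V
  edges : Set (V × ℕ × V)

/-- A play of a generic game. -/
def PGame.IsPlay {V : Type*} (g : PGame V) (w : ℕ → V × ℕ × V) : Prop :=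
  (w 0).1 = g.start ∧ IsPathSeq g.edges w

/-- `IsFinPath E u l v`: the list of edges `l` is a finite path from `u` to `v`. -/
def IsFinPath {V : Type*} (E : Set (V × ℕ × V)) : V → List (V × ℕ × V) → V → Prop
  | u, [], v => u = v
  | u, e :: l, v => e ∈ E ∧ e.1 = u ∧ IsFinPath E e.2.2 l v

/-- Even has a winning strategy in the game `g`. -/
def EvenWins {V : Type*} (g : PGame V) : Prop :=
  ∃ str : List (V × ℕ × V) → V × ℕ × V,
    (∀ l v, IsFinPath g.edges g.start l v → g.evenOwn v →
      str l ∈ g.edges ∧ (str l).1 = v) ∧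
    ∀ w, g.IsPlay w → (∀ k, g.evenOwn ((w k).1) → w k = str ((List.range k).map w)) →
      MaxInfOftEven fun k => (w k).2.1

/-- Odd has a winning strategy in the game `g`. -/
def OddWins {V : Type*} (g : PGame V) : Prop :=
  ∃ str : List (V × ℕ × V) → V × ℕ × V,
    (∀ l v, IsFinPath g.edges g.start l v → ¬ g.evenOwn v →
      str l ∈ g.edges ∧ (str l).1 = v) ∧
    ∀ w, g.IsPlay w → (∀ k, ¬ g.evenOwn ((w k).1) → w k = str ((List.range k).map w)) →
      ¬ MaxInfOftEven fun k => (w k).2.1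

/-- Even has a strategy winning for the safety condition `safe` in the game `g`. -/
def EvenWinsSafety {V : Type*} (g : PGame V) (safe : V → Prop) : Prop :=
  ∃ str : List (V × ℕ × V) → V × ℕ × V,
    (∀ l v, IsFinPath g.edges g.start l v → g.evenOwn v →
      str l ∈ g.edges ∧ (str l).1 = v) ∧
    ∀ w, g.IsPlay w → (∀ k, g.evenOwn ((w k).1) → w k = str ((List.range k).map w)) →
      ∀ k, safe (w k).2.2

/-- A game graph viewed as a generic game. -/
def GameGraph.toPGame {n d : ℕ} (G : GameGraph n d) : PGame ℕ :=
  { evenOwn := fun v => v ∈ G.evenN, start := G.start, edges := G.edges }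

/-- The synchronized product `G × A`. -/
def prodGame {n d : ℕ} {Q : Type*} (G : GameGraph n d) (A : Automaton Q) :
    PGame ((ℕ ⊕ Letter) × Q) where
  evenOwn := fun x => match x.1 with
    | Sum.inl v => v ∈ G.evenN
    | Sum.inr _ => True
  start := (Sum.inl G.start, A.init)
  edges := {ed | (∃ e ∈ G.edges, ∃ s : Q, ed = ((Sum.inl e.1, s), 1, (Sum.inr e, s))) ∨
    (∃ t ∈ A.trans, tLetter t ∈ G.edges ∧
      ed = ((Sum.inr (tLetter t), tSrc t), tPrio t, (Sum.inl (tLetter t).2.2, tTgt t)))}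

/-- The number of registers: `rn(n) = 1 + ⌊log₂ n⌋`. -/
def rn (n : ℕ) : ℕ := 1 + Nat.log 2 n

/-- Update of a register state (bottom register first) by priority `p`:
the maximal prefix of registers smaller than `p` is replaced by `p`. -/
def update (p : ℕ) : List ℕ → List ℕ
  | [] => []
  | r :: l => if r < p then p :: update p l else r :: l

/-- The `k`-reset (registers numbered from 1, bottom first): the `k`-th register is
removed and a `1` is inserted at the bottom. -/
def resetReg (k : ℕ) (l : List ℕ) : List ℕ := 1 :: l.eraseIdx (k - 1)

/-- The value of register number `k` (registers numbered from 1, bottom first). -/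
def regVal (k : ℕ) (l : List ℕ) : ℕ := l.getD (k - 1) 0

/-- Lehtinen's register automaton `R_{n,d}`. -/
def Raut (n d : ℕ) : Automaton (List ℕ) where
  init := List.replicate (rn n) 1
  trans := {t | ∃ s e, InAlph n d e ∧
    (t = (s, e, 1, update (prio e) s) ∨
     ∃ k, 1 ≤ k ∧ k ≤ rn n ∧
       ((Even (regVal k (update (prio e) s)) ∧
           t = (s, e, 2 * k, resetReg k (update (prio e) s))) ∨
        (Odd (regVal k (update (prio e) s)) ∧
           t = (s, e, 2 * k + 1, resetReg k (update (prio e) s)))))}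

/-- States of the safety automaton `S_{n,d}`: `none` is the rejecting state `rej`;
otherwise a state of `R_{n,d}` together with a tuple of counters (bottom first:
`c_0` is the head). -/
abbrev SState : Type := Option (List ℕ × List ℕ)

/-- Counters `c_0,…,c_{k-1}` are reset to `c0`; the rest is kept. -/
def bumpKeep (c0 k : ℕ) (c : List ℕ) : List ℕ := List.replicate k c0 ++ c.drop k

/-- Counters `c_0,…,c_{k-1}` are reset to `c0`; counter `c_k` is decremented. -/
def bumpDec (c0 k : ℕ) (c : List ℕ) : List ℕ :=
  List.replicate k c0 ++ ((c.getD k 0 - 1) :: c.drop (k + 1))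

/-- The safety automaton `S_{n,d}`. -/
def Saut (n d : ℕ) : Automaton SState where
  init := some (List.replicate (rn n) 1, List.replicate (rn n + 1) n)
  trans := {t |
    (∃ e, InAlph n d e ∧ t = (none, e, 1, none)) ∨
    (∃ s c e k s', 1 ≤ k ∧ (s, e, 2 * k, s') ∈ (Raut n d).trans ∧
       t = (some (s, c), e, 2, some (s', bumpKeep n k c))) ∨
    (∃ s c e k s', (s, e, 2 * k + 1, s') ∈ (Raut n d).trans ∧
       ((1 < c.getD k 0 ∧ t = (some (s, c), e, 2, some (s', bumpDec n k c))) ∨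
        (c.getD k 0 = 1 ∧ t = (some (s, c), e, 1, none))))}

/-- `bad(ρ) ≤ B` for an infinite run `ρ`: every infix containing no transition of
priority above an odd `p` contains at most `B` transitions of priority `p`. -/
def badLE {Q : Type*} (ρ : ℕ → Trans Q) (B : ℕ) : Prop :=
  ∀ a b p, Odd p → (∀ i, a ≤ i → i < b → tPrio (ρ i) ≤ p) →
    ((Finset.Ico a b).filter fun i => tPrio (ρ i) = p).card ≤ B

/-- `bad(ρ) ≤ B` for a partial run of length `L` (possibly infinite). -/
def badLEPartial {Q : Type*} (ρ : ℕ → Trans Q) (L : ℕ∞) (B : ℕ) : Prop :=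
  ∀ (a b p : ℕ), Odd p → (b : ℕ∞) ≤ L → (∀ i, a ≤ i → i < b → tPrio (ρ i) ≤ p) →
    ((Finset.Ico a b).filter fun i => tPrio (ρ i) = p).card ≤ B

/-- The strategy subgraph `G_τ`: all outgoing edges of Odd's nodes, and only the
chosen edge from each of Even's nodes. -/
def GtauEdges {n d : ℕ} (G : GameGraph n d) (τ : EPosStrat G) : Set Letter :=
  {e | e ∈ G.edges ∧ (e.1 ∈ G.evenN → e = τ.choice e.1)}

/-- One step along an edge of `E`. -/
def StepRel (E : Set Letter) (u v : ℕ) : Prop := ∃ p, (u, p, v) ∈ E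

/-- Reachability along edges of `E`. -/
def Reach (E : Set Letter) : ℕ → ℕ → Prop := Relation.ReflTransGen (StepRel E)

/-- `V_τ`: the nodes of `G_τ` reachable from the starting node. -/
def Vtau {n d : ℕ} (G : GameGraph n d) (τ : EPosStrat G) : Set ℕ :=
  {v | Reach (GtauEdges G τ) G.start v}

/-- `G_{S,p}`: edges of `E` inside `S` of priority at most `p`. -/
def subEdges (E : Set Letter) (S : Set ℕ) (p : ℕ) : Set Letter :=
  {e | e ∈ E ∧ e.1 ∈ S ∧ e.2.2 ∈ S ∧ prio e ≤ p}

/-- `parts` lists the strongly connected components of the graph `(S, E)` in a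
topological order. -/
def IsSCCDecomp (E : Set Letter) (S : Set ℕ) (parts : List (Set ℕ)) : Prop :=
  (∀ P ∈ parts, P.Nonempty ∧ P ⊆ S) ∧
  (∀ v ∈ S, ∃ P ∈ parts, v ∈ P) ∧
  List.Pairwise Disjoint parts ∧
  (∀ P ∈ parts, ∀ u ∈ P, ∀ v ∈ S, ((Reach E u v ∧ Reach E v u) ↔ v ∈ P)) ∧
  (∀ (i j : ℕ) (hi : i < parts.length) (hj : j < parts.length), i < j →
    ∀ u ∈ parts.get ⟨j, hj⟩, ∀ v ∈ parts.get ⟨i, hi⟩, ¬ StepRel E u v)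

/-- The nodes of a tree given by the children function `ch` with root `(r, R)`. -/
inductive TreeNode (ch : ℕ → Set ℕ → List (Set ℕ)) (r : ℕ) (R : Set ℕ) :
    ℕ → Set ℕ → Prop where
  | root : TreeNode ch r R r R
  | child {k : ℕ} {S T : Set ℕ} : TreeNode ch r R (k + 1) S → T ∈ ch (k + 1) S →
      TreeNode ch r R k T

/-- `ch` describes a game tree of `G_τ`: the root is `(⌈d/2⌉, V_τ)`, and the children
of a node `(k+1, S)` are the SCCs of `G_{S,2(k+1)-1}` in topological order. -/
def IsGameTree {n d : ℕ} (G : GameGraph n d) (τ : EPosStrat G)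
    (ch : ℕ → Set ℕ → List (Set ℕ)) : Prop :=
  ∀ k S, TreeNode ch ((d + 1) / 2) (Vtau G τ) (k + 1) S →
    IsSCCDecomp (subEdges (GtauEdges G τ) S (2 * (k + 1) - 1)) S (ch (k + 1) S)

/-- `fstl ch l k S`: the leftmost descendant of the node `(k, S)` on level `l`
(for `l ≤ k`). -/
def fstl (ch : ℕ → Set ℕ → List (Set ℕ)) (l : ℕ) : ℕ → Set ℕ → Set ℕ
  | 0, S => S
  | k + 1, S => if l = k + 1 then S else fstl ch l k ((ch (k + 1) S).headD ∅)

/-! ### Auxiliary development: positional determinacy of parity games -/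

section PosDet

open Classical

/-- Parity preferred by player `b` (`true` = Even). -/
def PPar (b : Bool) (p : ℕ) : Prop := if b then Even p else Odd p

/-- Player `b` wins the priority sequence `f`. -/
def WinsP (b : Bool) (f : ℕ → ℕ) : Prop :=
  ∃ p, PPar b p ∧ InfOft f p ∧ ∀ q, InfOft f q → q ≤ p

lemma pPar_true {p : ℕ} : PPar true p ↔ Even p := by simp [PPar]

lemma pPar_false {p : ℕ} : PPar false p ↔ Odd p := by simp [PPar]

lemma pPar_self (p : ℕ) : PPar (decide (Even p)) p := by
  by_cases h : Even p
  · simpa [h] using pPar_true.2 h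
  · simpa [h] using pPar_false.2 (Nat.odd_iff.2 (by rw [Nat.even_iff] at h; omega))

lemma winsP_not_both {b : Bool} {f : ℕ → ℕ} (h1 : WinsP b f) (h2 : WinsP (!b) f) : False := by
  obtain ⟨p, hp, hip, hbp⟩ := h1
  obtain ⟨q, hq, hiq, hbq⟩ := h2
  have hpq : p = q := le_antisymm (hbq p hip) (hbp q hiq)
  subst hpq
  cases b
  · rw [pPar_false] at hp
    rw [Bool.not_false, pPar_true] at hq
    rw [Nat.odd_iff] at hp; rw [Nat.even_iff] at hq; omega
  · rw [pPar_true] at hp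
    rw [Bool.not_true, pPar_false] at hq
    rw [Nat.even_iff] at hp; rw [Nat.odd_iff] at hq; omega

lemma infOft_shift (f : ℕ → ℕ) (m p : ℕ) : InfOft (fun k => f (k + m)) p ↔ InfOft f p := by
  constructor
  · intro h N
    obtain ⟨k, hk, he⟩ := h N
    exact ⟨k + m, le_trans hk (Nat.le_add_right _ _), he⟩
  · intro h N
    obtain ⟨k, hk, he⟩ := h (N + m)
    refine ⟨k - m, by omega, ?_⟩
    show f (k - m + m) = p
    have hkm : k - m + m = k := by omega
    rw [hkm]; exact he

lemma winsP_shift {b : Bool} (f : ℕ → ℕ) (m : ℕ) :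
    WinsP b (fun k => f (k + m)) ↔ WinsP b f := by
  constructor
  · rintro ⟨p, hp, hi, hb⟩
    exact ⟨p, hp, (infOft_shift f m p).1 hi, fun q hq => hb q ((infOft_shift f m q).2 hq)⟩
  · rintro ⟨p, hp, hi, hb⟩
    exact ⟨p, hp, (infOft_shift f m p).2 hi, fun q hq => hb q ((infOft_shift f m q).1 hq)⟩

/-- Play `w` is consistent with the positional strategy `σ` of player `b`. -/
def ConsW (own : ℕ → Bool) (b : Bool) (σ : ℕ → Letter) (w : ℕ → Letter) : Prop :=
  ∀ k, own (w k).1 = b → w k = σ ((w k).1)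

/-- Conclusion of Zielonka's theorem for the game `(S, E)`. -/
def ZCon (own : ℕ → Bool) (S : Set ℕ) (E : Set Letter)
    (W : Bool → Set ℕ) (σ : Bool → ℕ → Letter) : Prop :=
  (S ⊆ W true ∪ W false) ∧ (∀ b, W b ⊆ S) ∧
  (∀ b v, v ∈ S → own v = b → σ b v ∈ E ∧ (σ b v).1 = v) ∧
  (∀ b w, IsPathSeq E w → ConsW own b (σ b) w → (w 0).1 ∈ W b →
    WinsP b (fun k => prio (w k)))

/-- The play obtained by following `step` from `v`. -/
def mkPlay (step : ℕ → Letter) (v : ℕ) : ℕ → Letter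
  | 0 => step v
  | k + 1 => step ((mkPlay step v k).2.2)

lemma mkPlay_spec {S : Set ℕ} {E : Set Letter} (step : ℕ → Letter)
    (hstep : ∀ u ∈ S, step u ∈ E ∧ (step u).1 = u)
    (hES : ∀ e ∈ E, e.2.2 ∈ S) (v : ℕ) (hv : v ∈ S) :
    IsPathSeq E (mkPlay step v) ∧ (mkPlay step v 0).1 = v ∧
      ∀ k, mkPlay step v k = step ((mkPlay step v k).1) := by
  have inv : ∀ k, (mkPlay step v k).1 ∈ S ∧ mkPlay step v k = step ((mkPlay step v k).1) := by
    intro k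
    induction k with
    | zero =>
      have h := hstep v hv
      constructor
      · show (step v).1 ∈ S
        rw [h.2]; exact hv
      · show step v = step ((step v).1)
        rw [h.2]
    | succ k ih =>
      have hmem : mkPlay step v k ∈ E := by
        rw [ih.2]; exact (hstep _ ih.1).1
      have htgt : (mkPlay step v k).2.2 ∈ S := hES _ hmem
      have h := hstep _ htgt
      constructor
      · show (step _).1 ∈ S
        rw [h.2]; exact htgt
      · show step _ = step ((step _).1)
        rw [h.2]
  refine ⟨?_, ?_, fun k => (inv k).2⟩
  · intro k
    have hmem : mkPlay step v k ∈ E := by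
      rw [(inv k).2]; exact (hstep _ (inv k).1).1
    refine ⟨hmem, ?_⟩
    show _ = (step ((mkPlay step v k).2.2)).1
    rw [(hstep _ (hES _ hmem)).2]
  · show (step v).1 = v
    exact (hstep v hv).2

/-- One step of the attractor construction for player `b`, towards traversing an
edge of `F` (or entering the current set `X`). -/
def astep (own : ℕ → Bool) (S : Set ℕ) (E F : Set Letter) (b : Bool) (X : Set ℕ) : Set ℕ :=
  {v | v ∈ S ∧ ((own v = b ∧ ∃ e ∈ E, e.1 = v ∧ (e ∈ F ∨ e.2.2 ∈ X)) ∨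
      (¬ own v = b ∧ ∀ e ∈ E, e.1 = v → (e ∈ F ∨ e.2.2 ∈ X)))}

/-- Attractor approximants: from `attrN … k`, player `b` can force, within `k` steps,
that an `F`-edge is traversed or the set `T` is reached. -/
def attrN (own : ℕ → Bool) (S : Set ℕ) (E F : Set Letter) (b : Bool) (T : Set ℕ) : ℕ → Set ℕ
  | 0 => T
  | k + 1 => attrN own S E F b T k ∪ astep own S E F b (attrN own S E F b T k)

/-- The attractor. -/
def Attr (own : ℕ → Bool) (S : Set ℕ) (E F : Set Letter) (b : Bool) (T : Set ℕ) : Set ℕ :=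
  ⋃ k, attrN own S E F b T k

lemma astep_mono {own S E F b} {X Y : Set ℕ} (h : X ⊆ Y) :
    astep own S E F b X ⊆ astep own S E F b Y := by
  rintro v ⟨hvS, hc⟩
  refine ⟨hvS, ?_⟩
  rcases hc with ⟨hb, e, he, h1, h2⟩ | ⟨hb, hall⟩
  · exact Or.inl ⟨hb, e, he, h1, h2.imp id (fun hx => h hx)⟩
  · exact Or.inr ⟨hb, fun e he h1 => (hall e he h1).imp id (fun hx => h hx)⟩

lemma attrN_mono {own S E F b T} {k l : ℕ} (h : k ≤ l) :
    attrN own S E F b T k ⊆ attrN own S E F b T l := by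
  induction l with
  | zero => rw [Nat.le_zero.1 h]
  | succ l ih =>
    rcases Nat.lt_or_ge k (l+1) with h' | h'
    · exact (ih (by omega)).trans Set.subset_union_left
    · have : k = l + 1 := by omega
      rw [this]

lemma attrN_subset_attr {own S E F b T} (k : ℕ) :
    attrN own S E F b T k ⊆ Attr own S E F b T :=
  Set.subset_iUnion (fun k => attrN own S E F b T k) k

lemma attrN_subset_S {own : ℕ → Bool} {S : Set ℕ} {E F : Set Letter} {b T}
    (hT : T ⊆ S) (k : ℕ) : attrN own S E F b T k ⊆ S := by
  induction k with
  | zero => exact hT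
  | succ k ih =>
    rintro v (hv | hv)
    · exact ih hv
    · exact hv.1

lemma attr_subset_S {own : ℕ → Bool} {S : Set ℕ} {E F : Set Letter} {b T}
    (hT : T ⊆ S) : Attr own S E F b T ⊆ S := by
  rintro v hv
  obtain ⟨k, hk⟩ := Set.mem_iUnion.1 hv
  exact attrN_subset_S hT k hk

/-- The rank of a node in the attractor. -/
noncomputable def arank (own : ℕ → Bool) (S : Set ℕ) (E F : Set Letter) (b : Bool) (T : Set ℕ)
    (v : ℕ) : ℕ := sInf {k | v ∈ attrN own S E F b T k}

lemma arank_spec {own S E F b T v} (hv : v ∈ Attr own S E F b T) :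
    v ∈ attrN own S E F b T (arank own S E F b T v) := by
  have hne : {k | v ∈ attrN own S E F b T k}.Nonempty := Set.mem_iUnion.1 hv
  exact Nat.sInf_mem hne

lemma arank_le {own S E F b T v k} (h : v ∈ attrN own S E F b T k) :
    arank own S E F b T v ≤ k := Nat.sInf_le h

lemma attr_succ {own S E F b T v} (hv : v ∈ Attr own S E F b T) (hvT : v ∉ T) :
    ∃ r, arank own S E F b T v = r + 1 ∧
      v ∈ astep own S E F b (attrN own S E F b T r) ∧ v ∉ attrN own S E F b T r := by
  have h0 : arank own S E F b T v ≠ 0 := by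
    intro h
    have := arank_spec hv
    rw [h] at this
    exact hvT this
  obtain ⟨r, hr⟩ : ∃ r, arank own S E F b T v = r + 1 :=
    ⟨arank own S E F b T v - 1, by omega⟩
  have hmem : v ∈ attrN own S E F b T (r + 1) := by rw [← hr]; exact arank_spec hv
  have hnot : v ∉ attrN own S E F b T r := by
    intro h
    have := arank_le h
    omega
  refine ⟨r, hr, ?_, hnot⟩
  rcases hmem with h | h
  · exact absurd h hnot
  · exact h

/-- The attractor strategy for player `b`. -/
noncomputable def attStrat (own : ℕ → Bool) (S : Set ℕ) (E F : Set Letter) (b : Bool)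
    (T : Set ℕ) (v : ℕ) : Letter :=
  if h : ∃ e ∈ E, e.1 = v ∧ (e ∈ F ∨ e.2.2 ∈ attrN own S E F b T (arank own S E F b T v - 1))
  then h.choose else (0, 0, 0)

lemma attStrat_spec {own S E F b T v} (hv : v ∈ Attr own S E F b T) (hvT : v ∉ T)
    (hb : own v = b) :
    attStrat own S E F b T v ∈ E ∧ (attStrat own S E F b T v).1 = v ∧
      (attStrat own S E F b T v ∈ F ∨
        ((attStrat own S E F b T v).2.2 ∈ Attr own S E F b T ∧
          arank own S E F b T (attStrat own S E F b T v).2.2 < arank own S E F b T v)) := by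
  obtain ⟨r, hr, hstep, hnot⟩ := attr_succ hv hvT
  have hcase : ∃ e ∈ E, e.1 = v ∧ (e ∈ F ∨ e.2.2 ∈ attrN own S E F b T r) := by
    rcases hstep.2 with ⟨_, h⟩ | ⟨hnb, _⟩
    · exact h
    · exact absurd hb hnb
  have hr1 : arank own S E F b T v - 1 = r := by omega
  rw [attStrat, hr1, dif_pos hcase]
  obtain ⟨he, h1, h2⟩ := hcase.choose_spec
  refine ⟨he, h1, h2.imp id ?_⟩
  intro hx
  refine ⟨attrN_subset_attr r hx, ?_⟩
  have := arank_le hx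
  omega

lemma attr_force (own : ℕ → Bool) (S : Set ℕ) (E F : Set Letter) (b : Bool) (T : Set ℕ)
    (w : ℕ → Letter) (hw : IsPathSeq E w)
    (hcons : ∀ k, own (w k).1 = b → (w k).1 ∈ Attr own S E F b T → (w k).1 ∉ T →
      w k = attStrat own S E F b T ((w k).1)) :
    ∀ t, (w t).1 ∈ Attr own S E F b T → ∃ t', t ≤ t' ∧ (w t' ∈ F ∨ (w t').1 ∈ T) := by
  have main : ∀ r t, arank own S E F b T ((w t).1) ≤ r → (w t).1 ∈ Attr own S E F b T →
      ∃ t', t ≤ t' ∧ (w t' ∈ F ∨ (w t').1 ∈ T) := by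
    intro r
    induction r with
    | zero =>
      intro t hle hmem
      by_cases hT : (w t).1 ∈ T
      · exact ⟨t, le_rfl, Or.inr hT⟩
      · obtain ⟨r, hr, _, _⟩ := attr_succ hmem hT
        omega
    | succ r ih =>
      intro t hle hmem
      by_cases hT : (w t).1 ∈ T
      · exact ⟨t, le_rfl, Or.inr hT⟩
      by_cases hb : own ((w t).1) = b
      · have hc := hcons t hb hmem hT
        have hs := attStrat_spec hmem hT hb
        rw [← hc] at hs
        rcases hs.2.2 with hF | ⟨hmem', hlt⟩
        · exact ⟨t, le_rfl, Or.inl hF⟩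
        · have hnext : (w (t+1)).1 = (w t).2.2 := ((hw t).2).symm
          have hle' : arank own S E F b T ((w (t+1)).1) ≤ r := by
            rw [hnext]; omega
          obtain ⟨t', ht', h'⟩ := ih (t+1) hle' (by rw [hnext]; exact hmem')
          exact ⟨t', by omega, h'⟩
      · obtain ⟨r', hr', hstep, hnot⟩ := attr_succ hmem hT
        rcases hstep.2 with ⟨hob, _⟩ | ⟨_, hall⟩
        · exact absurd hob hb
        · rcases hall (w t) (hw t).1 rfl with hF | hmem'
          · exact ⟨t, le_rfl, Or.inl hF⟩
          · have hnext : (w (t+1)).1 = (w t).2.2 := ((hw t).2).symm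
            have hle' : arank own S E F b T ((w (t+1)).1) ≤ r := by
              rw [hnext]
              have := arank_le hmem'
              omega
            obtain ⟨t', ht', h'⟩ := ih (t+1) hle' (by
              rw [hnext]; exact attrN_subset_attr r' hmem')
            exact ⟨t', by omega, h'⟩
  intro t ht
  exact main (arank own S E F b T ((w t).1)) t le_rfl ht

lemma not_mem_attr (own : ℕ → Bool) (S : Set ℕ) (E F : Set Letter) (b : Bool) (T : Set ℕ)
    (hEfin : E.Finite) (v : ℕ) (hv : v ∈ S) (hvA : v ∉ Attr own S E F b T) :
    (own v = b → ∀ e ∈ E, e.1 = v → e ∉ F ∧ e.2.2 ∉ Attr own S E F b T) ∧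
    (¬ own v = b → ∃ e ∈ E, e.1 = v ∧ e ∉ F ∧ e.2.2 ∉ Attr own S E F b T) := by
  constructor
  · intro hb e he h1
    constructor
    · intro hF
      exact hvA (attrN_subset_attr 1 (Or.inr ⟨hv, Or.inl ⟨hb, e, he, h1, Or.inl hF⟩⟩))
    · intro hA
      obtain ⟨k, hk⟩ := Set.mem_iUnion.1 hA
      exact hvA (attrN_subset_attr (k+1) (Or.inr ⟨hv, Or.inl ⟨hb, e, he, h1, Or.inr hk⟩⟩))
  · intro hb
    by_contra hno
    push_neg at hno
    have hall : ∀ e ∈ E, e.1 = v → e ∈ F ∨ e.2.2 ∈ Attr own S E F b T := by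
      intro e he h1
      by_cases hF : e ∈ F
      · exact Or.inl hF
      · exact Or.inr (hno e he h1 hF)
    have hEv : {e : Letter | e ∈ E ∧ e.1 = v}.Finite := hEfin.subset (fun e he => he.1)
    set K : ℕ := hEv.toFinset.sup (fun e => arank own S E F b T e.2.2) with hK
    have hallK : ∀ e ∈ E, e.1 = v → e ∈ F ∨ e.2.2 ∈ attrN own S E F b T K := by
      intro e he h1
      rcases hall e he h1 with h | h
      · exact Or.inl h
      · refine Or.inr (attrN_mono ?_ (arank_spec h))
        exact Finset.le_sup (f := fun e => arank own S E F b T e.2.2)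
          (hEv.mem_toFinset.2 ⟨he, h1⟩)
    exact hvA (attrN_subset_attr (K+1)
      (Or.inr ⟨hv, Or.inr ⟨hb, hallK⟩⟩))

lemma edges_finite {S : Set ℕ} (hfin : S.Finite) {E : Set Letter} {d : ℕ}
    (hE : ∀ e ∈ E, e.1 ∈ S ∧ e.2.2 ∈ S ∧ prio e ≤ d) : E.Finite := by
  apply Set.Finite.subset (hfin.prod ((Set.finite_Iic d).prod hfin))
  intro e he
  obtain ⟨h1, h2, h3⟩ := hE e he
  exact ⟨h1, h3, h2⟩

/-- One-step trap property derived from a Zielonka conclusion. -/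
lemma trap1 {own : ℕ → Bool} {S : Set ℕ} {E : Set Letter} {W : Bool → Set ℕ}
    {σ : Bool → ℕ → Letter} (hzc : ZCon own S E W σ)
    (hES : ∀ e ∈ E, e.2.2 ∈ S) (b : Bool) (v : ℕ) (e : Letter)
    (hv : v ∈ W b) (he : e ∈ E) (h1 : e.1 = v) (hc : own v = b → e = σ b v) :
    e.2.2 ∈ W b := by
  by_cases hW : e.2.2 ∈ W b
  · exact hW
  exfalso
  have htS : e.2.2 ∈ S := hES e he
  have htW : e.2.2 ∈ W (!b) := by
    rcases hzc.1 htS with h | h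
    · cases b
      · exact h
      · exact absurd h hW
    · cases b
      · exact absurd h hW
      · exact h
  set step : ℕ → Letter := fun x => σ (own x) x with hstepdef
  have hstep : ∀ u ∈ S, step u ∈ E ∧ (step u).1 = u := by
    intro u hu
    exact hzc.2.2.1 (own u) u hu rfl
  obtain ⟨hpath, hstart, hconsu⟩ := mkPlay_spec step hstep hES e.2.2 htS
  set u : ℕ → Letter := mkPlay step e.2.2 with hudef
  have hconsu' : ∀ b', ConsW own b' (σ b') u := by
    intro b' k hk
    have h2 : step ((u k).1) = σ b' ((u k).1) := by
      show σ (own ((u k).1)) ((u k).1) = _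
      rw [hk]
    rw [← h2]
    exact hconsu k
  have hwinu : WinsP (!b) (fun k => prio (u k)) :=
    hzc.2.2.2 (!b) u hpath (hconsu' (!b)) (by rw [hstart]; exact htW)
  set w' : ℕ → Letter := fun k => Nat.casesOn k e (fun k' => u k') with hw'def
  have hpath' : IsPathSeq E w' := by
    intro k
    cases k with
    | zero =>
      refine ⟨he, ?_⟩
      show e.2.2 = (u 0).1
      rw [hstart]
    | succ k => exact hpath k
  have hcons' : ConsW own b (σ b) w' := by
    intro k hk
    cases k with
    | zero =>
      show e = σ b (e.1)
      have hk' : own e.1 = b := hk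
      rw [h1] at hk'
      rw [h1]
      exact hc hk'
    | succ k => exact hconsu' b k hk
  have hwinw : WinsP b (fun k => prio (w' k)) :=
    hzc.2.2.2 b w' hpath' hcons' (by show e.1 ∈ W b; rw [h1]; exact hv)
  have hshift : WinsP b (fun k => prio (u k)) := by
    have h := (winsP_shift (b := b) (fun k => prio (w' k)) 1).2 hwinw
    have heq : (fun k => prio (w' (k + 1))) = (fun k => prio (u k)) := rfl
    rw [heq] at h
    exact h
  exact winsP_not_both hshift hwinu

lemma bool_eq_not {a b : Bool} (h : ¬ a = b) : a = !b := by
  cases a <;> cases b <;> simp_all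

lemma zcon_of_pair (own : ℕ → Bool) (S : Set ℕ) (E : Set Letter) (i : Bool)
    (Wi Wj : Set ℕ) (σi σj : ℕ → Letter)
    (hcov : S ⊆ Wi ∪ Wj) (hWiS : Wi ⊆ S) (hWjS : Wj ⊆ S)
    (hvi : ∀ v ∈ S, own v = i → σi v ∈ E ∧ (σi v).1 = v)
    (hvj : ∀ v ∈ S, own v = !i → σj v ∈ E ∧ (σj v).1 = v)
    (hwi : ∀ w, IsPathSeq E w → ConsW own i σi w → (w 0).1 ∈ Wi →
      WinsP i (fun k => prio (w k)))
    (hwj : ∀ w, IsPathSeq E w → ConsW own (!i) σj w → (w 0).1 ∈ Wj →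
      WinsP (!i) (fun k => prio (w k))) :
    ∃ W σ, ZCon own S E W σ := by
  refine ⟨fun b => if b = i then Wi else Wj, fun b => if b = i then σi else σj, ?_, ?_, ?_, ?_⟩
  · intro v hv
    rcases hcov hv with h | h <;> cases i <;> simp <;> tauto
  · intro b
    by_cases h : b = i <;> simp [h, hWiS, hWjS]
  · intro b v hv hb
    by_cases h : b = i
    · subst h; simpa using hvi v hv hb
    · have hb' : own v = !i := by rw [hb]; exact bool_eq_not h
      simp only [if_neg h]
      exact hvj v hv hb'
  · intro b w hw hc hst
    by_cases h : b = i
    · subst h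
      simp only [if_pos rfl] at hc hst
      exact hwi w hw hc hst
    · have hbi : b = !i := bool_eq_not h
      subst hbi
      simp only [if_neg h] at hc hst
      exact hwj w hw hc hst

noncomputable def defStrat (E : Set Letter) (v : ℕ) : Letter :=
  if h : ∃ e ∈ E, e.1 = v then h.choose else (0, 0, 0)

lemma defStrat_spec {E : Set Letter} {v : ℕ} (h : ∃ e ∈ E, e.1 = v) :
    defStrat E v ∈ E ∧ (defStrat E v).1 = v := by
  rw [defStrat, dif_pos h]
  exact ⟨h.choose_spec.1, h.choose_spec.2⟩

/-- Zielonka's theorem: finite parity games are positionally determined. -/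
theorem zielonka (own : ℕ → Bool) (d : ℕ) :
    ∀ S : Set ℕ, S.Finite → ∀ E : Set Letter,
      (∀ e ∈ E, e.1 ∈ S ∧ e.2.2 ∈ S ∧ prio e ≤ d) →
      (∀ v ∈ S, ∃ e ∈ E, e.1 = v) →
      ∃ W σ, ZCon own S E W σ := by
  induction d with
  | zero =>
    intro S hfin E hE htot
    refine zcon_of_pair own S E true S ∅ (defStrat E) (defStrat E)
      (fun v hv => Or.inl hv) (Set.Subset.refl S) (Set.empty_subset S) ?_ ?_ ?_ ?_
    · intro v hv _; exact defStrat_spec (htot v hv)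
    · intro v hv _; exact defStrat_spec (htot v hv)
    · intro w hw _ _
      refine ⟨0, pPar_true.2 Even.zero, ?_, ?_⟩
      · intro N
        refine ⟨N, le_rfl, ?_⟩
        show prio (w N) = 0
        have := (hE _ (hw N).1).2.2
        omega
      · intro q hq
        obtain ⟨k, _, hk⟩ := hq 0
        have h1 : prio (w k) = q := hk
        have := (hE _ (hw k).1).2.2
        omega
    · intro w _ _ hst
      exact absurd hst (Set.notMem_empty _)
  | succ d ihd =>
    suffices h : ∀ (m : ℕ) (S : Set ℕ), S.Finite → S.ncard ≤ m → ∀ E : Set Letter,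
        (∀ e ∈ E, e.1 ∈ S ∧ e.2.2 ∈ S ∧ prio e ≤ d + 1) →
        (∀ v ∈ S, ∃ e ∈ E, e.1 = v) →
        ∃ W σ, ZCon own S E W σ by
      intro S hfin E hE htot
      exact h S.ncard S hfin le_rfl E hE htot
    intro m
    induction m with
    | zero =>
      intro S hfin hcard E hE htot
      have hSempty : S = ∅ := by
        rw [← Set.ncard_eq_zero hfin]; omega
      subst hSempty
      refine ⟨fun _ => ∅, fun _ _ => (0,0,0), ?_, ?_, ?_, ?_⟩
      · intro v hv; exact absurd hv (Set.notMem_empty _)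
      · intro b; exact Set.Subset.refl _
      · intro b v hv; exact absurd hv (Set.notMem_empty _)
      · intro b w _ _ hst; exact absurd hst (Set.notMem_empty _)
    | succ m ihm =>
      intro S hfin hcard E hE htot
      have hEfin : E.Finite := edges_finite hfin hE
      set i : Bool := decide (Even (d + 1)) with hidef
      set F : Set Letter := {e | e ∈ E ∧ prio e = d + 1} with hFdef
      set A : Set ℕ := Attr own S E F i ∅ with hAdef
      set S' : Set ℕ := S \ A with hS'def
      set E' : Set Letter := {e | e ∈ E ∧ e ∉ F ∧ e.1 ∈ S' ∧ e.2.2 ∈ S'} with hE'def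
      have hE'S : ∀ e ∈ E', e.1 ∈ S' ∧ e.2.2 ∈ S' ∧ prio e ≤ d := by
        intro e he
        refine ⟨he.2.2.1, he.2.2.2, ?_⟩
        have h1 := (hE e he.1).2.2
        have h2 : prio e ≠ d + 1 := fun h => he.2.1 ⟨he.1, h⟩
        omega
      have htot' : ∀ v ∈ S', ∃ e ∈ E', e.1 = v := by
        intro v hv
        have hnm := not_mem_attr own S E F i ∅ hEfin v hv.1 hv.2
        by_cases hb : own v = i
        · obtain ⟨e, heE, he1⟩ := htot v hv.1
          obtain ⟨hF1, hA1⟩ := hnm.1 hb e heE he1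
          exact ⟨e, ⟨heE, hF1, by rw [he1]; exact hv, (hE e heE).2.1, hA1⟩, he1⟩
        · obtain ⟨e, heE, he1, heF, heA⟩ := hnm.2 hb
          exact ⟨e, ⟨heE, heF, by rw [he1]; exact hv, (hE e heE).2.1, heA⟩, he1⟩
      obtain ⟨W', σ', hzc'⟩ := ihd S' (hfin.subset Set.diff_subset) E' hE'S htot'
      have hiw : PPar i (d + 1) := pPar_self (d + 1)
      have hnji : ¬ (!i) = i := by cases i <;> simp
      have hE'sub : E' ⊆ E := fun e he => he.1
      have hE'tgt : ∀ e ∈ E', e.2.2 ∈ S' := fun e he => he.2.2.2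
      by_cases hWj : W' (!i) = ∅
      · -- CASE 1: player i wins everywhere
        refine zcon_of_pair own S E i S ∅
          (fun v => if v ∈ A then attStrat own S E F i ∅ v else σ' i v)
          (defStrat E) (fun v hv => Or.inl hv) (Set.Subset.refl S) (Set.empty_subset S)
          ?_ ?_ ?_ ?_
        · intro v hv hb
          by_cases hA' : v ∈ A
          · have h := attStrat_spec (T := ∅) hA' (Set.notMem_empty v) hb
            simp only [if_pos hA']
            exact ⟨h.1, h.2.1⟩
          · simp only [if_neg hA']
            have h := hzc'.2.2.1 i v ⟨hv, hA'⟩ hb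
            exact ⟨hE'sub h.1, h.2⟩
        · intro v hv _
          exact defStrat_spec (htot v hv)
        · -- winning for i from S
          intro w hw hcons hst
          by_cases hF : ∀ t, ∃ t', t ≤ t' ∧ w t' ∈ F
          · refine ⟨d + 1, hiw, ?_, ?_⟩
            · intro N
              obtain ⟨t', ht', hFt⟩ := hF N
              exact ⟨t', ht', hFt.2⟩
            · intro q hq
              obtain ⟨k, _, hk⟩ := hq 0
              have h1 : prio (w k) = q := hk
              have := (hE _ (hw k).1).2.2
              omega
          · push_neg at hF
            obtain ⟨t, ht⟩ := hF
            have hnA : ∀ t', t ≤ t' → (w t').1 ∉ A := by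
              intro t' htt' hA'
              have hc' : ∀ k, own ((w k).1) = i → (w k).1 ∈ Attr own S E F i ∅ →
                  (w k).1 ∉ (∅ : Set ℕ) → w k = attStrat own S E F i ∅ ((w k).1) := by
                intro k hbk hAk _
                have h1 := hcons k hbk
                simp only [if_pos (show (w k).1 ∈ A from hAk)] at h1
                exact h1
              obtain ⟨t'', htt'', hF'⟩ := attr_force own S E F i ∅ w hw hc' t' hA'
              rcases hF' with h | h
              · exact ht t'' (le_trans htt' htt'') h
              · exact absurd h (Set.notMem_empty _)
            have hS'mem : ∀ k, (w (k + t)).1 ∈ S' :=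
              fun k => ⟨(hE _ (hw (k + t)).1).1, hnA _ (Nat.le_add_left _ _)⟩
            have htail : IsPathSeq E' (fun k => w (k + t)) := by
              intro k
              have hlink : (w (k + t)).2.2 = (w (k + 1 + t)).1 := by
                have h0 := (hw (k + t)).2
                have harith : k + t + 1 = k + 1 + t := by omega
                rwa [harith] at h0
              refine ⟨⟨(hw (k + t)).1, ht (k + t) (Nat.le_add_left _ _), hS'mem k, ?_⟩, hlink⟩
              rw [hlink]; exact hS'mem (k + 1)
            have hcons' : ConsW own i (σ' i) (fun k => w (k + t)) := by
              intro k hb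
              have h1 := hcons (k + t) hb
              simp only [if_neg (hS'mem k).2] at h1
              exact h1
            have hstart' : ((fun k => w (k + t)) 0).1 ∈ W' i := by
              have h := hzc'.1 (hS'mem 0)
              have h2 : (w (0 + t)).1 ∈ W' i ∪ W' (!i) := by
                cases i
                · rw [Set.union_comm]; exact h
                · exact h
              rcases h2 with h2 | h2
              · exact h2
              · rw [hWj] at h2; exact absurd h2 (Set.notMem_empty _)
            have hwin := hzc'.2.2.2 i _ htail hcons' hstart'
            exact (winsP_shift (fun k => prio (w k)) t).1 hwin
        · intro w _ _ hst
          exact absurd hst (Set.notMem_empty _)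
      · -- CASE 2
        set B : Set ℕ := Attr own S E ∅ (!i) (W' (!i)) with hBdef
        have hTB : W' (!i) ⊆ B := fun v hv => attrN_subset_attr 0 hv
        have hW'S : W' (!i) ⊆ S := (hzc'.2.1 (!i)).trans Set.diff_subset
        have hBS : B ⊆ S := attr_subset_S hW'S
        obtain ⟨x, hx⟩ := Set.nonempty_iff_ne_empty.2 hWj
        have hSBcard : (S \ B).ncard ≤ m := by
          have hss : S \ B ⊂ S := by
            refine Set.ssubset_iff_subset_ne.2 ⟨Set.diff_subset, ?_⟩
            intro h
            have hxx : x ∈ S \ B := by rw [h]; exact hW'S hx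
            exact hxx.2 (hTB hx)
          have := Set.ncard_lt_ncard hss hfin
          omega
        set E'' : Set Letter := {e | e ∈ E ∧ e.1 ∈ S \ B ∧ e.2.2 ∈ S \ B} with hE''def
        have hE''S : ∀ e ∈ E'', e.1 ∈ S \ B ∧ e.2.2 ∈ S \ B ∧ prio e ≤ d + 1 :=
          fun e he => ⟨he.2.1, he.2.2, (hE e he.1).2.2⟩
        have htot'' : ∀ v ∈ S \ B, ∃ e ∈ E'', e.1 = v := by
          intro v hv
          have hnm := not_mem_attr own S E ∅ (!i) (W' (!i)) hEfin v hv.1 hv.2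
          by_cases hb : own v = !i
          · obtain ⟨e, heE, he1⟩ := htot v hv.1
            obtain ⟨_, hA1⟩ := hnm.1 hb e heE he1
            exact ⟨e, ⟨heE, by rw [he1]; exact hv, (hE e heE).2.1, hA1⟩, he1⟩
          · obtain ⟨e, heE, he1, _, heA⟩ := hnm.2 hb
            exact ⟨e, ⟨heE, by rw [he1]; exact hv, (hE e heE).2.1, heA⟩, he1⟩
        obtain ⟨W'', σ'', hzc''⟩ :=
          ihm (S \ B) (hfin.subset Set.diff_subset) hSBcard E'' hE''S htot''
        have hE''sub : E'' ⊆ E := fun e he => he.1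
        refine zcon_of_pair own S E i (W'' i) (B ∪ W'' (!i))
          (fun v => if v ∈ S \ B then σ'' i v else defStrat E v)
          (fun v => if v ∈ W' (!i) then σ' (!i) v
            else if v ∈ B then attStrat own S E ∅ (!i) (W' (!i)) v
            else if v ∈ S \ B then σ'' (!i) v else defStrat E v)
          ?_ ?_ ?_ ?_ ?_ ?_ ?_
        · -- covering
          intro v hv
          by_cases hB' : v ∈ B
          · exact Or.inr (Or.inl hB')
          · have h := hzc''.1 ⟨hv, hB'⟩
            have h2 : v ∈ W'' i ∪ W'' (!i) := by
              cases i
              · rw [Set.union_comm]; exact h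
              · exact h
            rcases h2 with h2 | h2
            · exact Or.inl h2
            · exact Or.inr (Or.inr h2)
        · exact (hzc''.2.1 i).trans Set.diff_subset
        · exact Set.union_subset hBS ((hzc''.2.1 (!i)).trans Set.diff_subset)
        · -- validity i
          intro v hv hb
          by_cases h : v ∈ S \ B
          · simp only [if_pos h]
            have hval := hzc''.2.2.1 i v h hb
            exact ⟨hE''sub hval.1, hval.2⟩
          · simp only [if_neg h]; exact defStrat_spec (htot v hv)
        · -- validity j
          intro v hv hb
          by_cases h1 : v ∈ W' (!i)
          · simp only [if_pos h1]
            have hval := hzc'.2.2.1 (!i) v (hzc'.2.1 (!i) h1) hb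
            exact ⟨hE'sub hval.1, hval.2⟩
          · simp only [if_neg h1]
            by_cases h2 : v ∈ B
            · simp only [if_pos h2]
              have h := attStrat_spec (T := W' (!i)) h2 h1 hb
              exact ⟨h.1, h.2.1⟩
            · simp only [if_neg h2]
              by_cases h3 : v ∈ S \ B
              · simp only [if_pos h3]
                have hval := hzc''.2.2.1 (!i) v h3 hb
                exact ⟨hE''sub hval.1, hval.2⟩
              · simp only [if_neg h3]; exact defStrat_spec (htot v hv)
        · -- winning i from W'' i
          intro w hw hcons hst
          have hmem : ∀ k, (w k).1 ∈ S \ B := by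
            intro k
            induction k with
            | zero => exact hzc''.2.1 i hst
            | succ k ih =>
              by_cases hb : own ((w k).1) = i
              · have h1 := hcons k hb
                simp only [if_pos ih] at h1
                have hval := hzc''.2.2.1 i _ ih hb
                rw [← h1] at hval
                rw [← (hw k).2]
                exact hval.1.2.2
              · have hob : own ((w k).1) = !i := bool_eq_not hb
                have hnm := not_mem_attr own S E ∅ (!i) (W' (!i)) hEfin _ ih.1 ih.2
                have h2 := (hnm.1 hob (w k) (hw k).1 rfl).2
                rw [← (hw k).2]
                exact ⟨(hE _ (hw k).1).2.1, h2⟩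
          have hw'' : IsPathSeq E'' w :=
            fun k => ⟨⟨(hw k).1, hmem k, by rw [(hw k).2]; exact hmem (k+1)⟩, (hw k).2⟩
          have hc'' : ConsW own i (σ'' i) w := by
            intro k hb
            have h1 := hcons k hb
            simp only [if_pos (hmem k)] at h1
            exact h1
          exact hzc''.2.2.2 i w hw'' hc'' hst
        · -- winning j from B ∪ W'' j
          intro w hw hcons hst
          have hstep1 : ∀ s, (w s).1 ∈ W' (!i) → w s ∈ E' ∧ (w (s+1)).1 ∈ W' (!i) := by
            intro s hs
            have hsS' : (w s).1 ∈ S' := hzc'.2.1 (!i) hs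
            by_cases hb : own ((w s).1) = !i
            · have h1 := hcons s hb
              simp only [if_pos hs] at h1
              have hval := hzc'.2.2.1 (!i) _ hsS' hb
              rw [← h1] at hval
              have htgt : (w s).2.2 ∈ W' (!i) :=
                trap1 hzc' hE'tgt (!i) _ _ hs hval.1 rfl (fun _ => h1)
              exact ⟨hval.1, by rw [← (hw s).2]; exact htgt⟩
            · have hob : own ((w s).1) = i := by
                have h0 := bool_eq_not hb
                rwa [Bool.not_not] at h0
              have hnm := not_mem_attr own S E F i ∅ hEfin _ hsS'.1 hsS'.2
              obtain ⟨hF1, hA1⟩ := hnm.1 hob (w s) (hw s).1 rfl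
              have hE'mem : w s ∈ E' :=
                ⟨(hw s).1, hF1, hsS', (hE _ (hw s).1).2.1, hA1⟩
              have htgt : (w s).2.2 ∈ W' (!i) :=
                trap1 hzc' hE'tgt (!i) _ _ hs hE'mem rfl
                  (fun hcontra => absurd (hcontra.symm.trans hob) hnji)
              exact ⟨hE'mem, by rw [← (hw s).2]; exact htgt⟩
          have hc1 : ∀ t, (w t).1 ∈ W' (!i) → WinsP (!i) (fun k => prio (w k)) := by
            intro t hWt
            have hmem : ∀ k, (w (k + t)).1 ∈ W' (!i) := by
              intro k
              induction k with
              | zero => simpa using hWt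
              | succ k ih =>
                have h0 := (hstep1 (k + t) ih).2
                have harith : k + t + 1 = k + 1 + t := by omega
                rwa [harith] at h0
            have htail : IsPathSeq E' (fun k => w (k + t)) := by
              intro k
              refine ⟨(hstep1 (k + t) (hmem k)).1, ?_⟩
              have h0 := (hw (k + t)).2
              have harith : k + t + 1 = k + 1 + t := by omega
              rwa [harith] at h0
            have hcons' : ConsW own (!i) (σ' (!i)) (fun k => w (k + t)) := by
              intro k hb
              have h1 := hcons (k + t) hb
              simp only [if_pos (hmem k)] at h1
              exact h1
            have hwin := hzc'.2.2.2 (!i) _ htail hcons' (hmem 0)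
            exact (winsP_shift (fun k => prio (w k)) t).1 hwin
          have hc2 : ∀ t, (w t).1 ∈ B → ∃ t', t ≤ t' ∧ (w t').1 ∈ W' (!i) := by
            intro t hB'
            have hcA : ∀ k, own ((w k).1) = !i → (w k).1 ∈ Attr own S E ∅ (!i) (W' (!i)) →
                (w k).1 ∉ W' (!i) → w k = attStrat own S E ∅ (!i) (W' (!i)) ((w k).1) := by
              intro k hb hA' hT
              have h1 := hcons k hb
              simp only [if_neg hT, if_pos (show (w k).1 ∈ B from hA')] at h1
              exact h1
            obtain ⟨t', ht', h⟩ := attr_force own S E ∅ (!i) (W' (!i)) w hw hcA t hB'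
            rcases h with h | h
            · exact absurd h (Set.notMem_empty _)
            · exact ⟨t', ht', h⟩
          by_cases hBv : ∃ t, (w t).1 ∈ B
          · obtain ⟨t, ht⟩ := hBv
            obtain ⟨t', _, h⟩ := hc2 t ht
            exact hc1 t' h
          · push_neg at hBv
            have hst'' : (w 0).1 ∈ W'' (!i) := by
              rcases hst with h | h
              · exact absurd h (hBv 0)
              · exact h
            have hmem : ∀ k, (w k).1 ∈ S \ B := fun k => ⟨(hE _ (hw k).1).1, hBv k⟩
            have hw'' : IsPathSeq E'' w :=
              fun k => ⟨⟨(hw k).1, hmem k, by rw [(hw k).2]; exact hmem (k+1)⟩, (hw k).2⟩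
            have hc'' : ConsW own (!i) (σ'' (!i)) w := by
              intro k hb
              have h1 := hcons k hb
              have hnW : (w k).1 ∉ W' (!i) := fun h => (hBv k) (hTB h)
              simp only [if_neg hnW, if_neg (hBv k), if_pos (hmem k)] at h1
              exact h1
            exact hzc''.2.2.2 (!i) w hw'' hc'' hst''

lemma winsP_true_iff (f : ℕ → ℕ) : WinsP true f ↔ MaxInfOftEven f := by
  unfold WinsP MaxInfOftEven
  constructor
  · rintro ⟨p, hp, h⟩; exact ⟨p, pPar_true.1 hp, h⟩
  · rintro ⟨p, hp, h⟩; exact ⟨p, pPar_true.2 hp, h⟩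

lemma winsP_false_iff (f : ℕ → ℕ) : WinsP false f ↔ MaxInfOftOdd f := by
  unfold WinsP MaxInfOftOdd
  constructor
  · rintro ⟨p, hp, h⟩; exact ⟨p, pPar_false.1 hp, h⟩
  · rintro ⟨p, hp, h⟩; exact ⟨p, pPar_false.2 hp, h⟩

lemma maxInfOft_not_both {f : ℕ → ℕ} (h1 : MaxInfOftEven f) (h2 : MaxInfOftOdd f) : False :=
  winsP_not_both (b := true) ((winsP_true_iff f).2 h1) (by
    rw [Bool.not_true, winsP_false_iff]; exact h2)

/-- The endpoint of a finite path (given as edge list), with default `v0`. -/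
def endp {V : Type*} (v0 : V) (l : List (V × ℕ × V)) : V :=
  match l.getLast? with
  | none => v0
  | some e => e.2.2

lemma endp_nil {V : Type*} (v0 : V) : endp v0 [] = v0 := rfl

lemma endp_concat {V : Type*} (v0 : V) (l : List (V × ℕ × V)) (e : V × ℕ × V) :
    endp v0 (l ++ [e]) = e.2.2 := by
  unfold endp
  rw [List.getLast?_concat]

lemma endp_finpath {V : Type*} {E : Set (V × ℕ × V)} :
    ∀ (l : List (V × ℕ × V)) (u v : V), IsFinPath E u l v → endp u l = v := by
  intro l
  induction l with
  | nil => intro u v h; exact h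
  | cons e l ih =>
    intro u v h
    obtain ⟨heE, he1, hrest⟩ := h
    cases l with
    | nil => exact hrest
    | cons f l' =>
      have h2 : endp u (e :: f :: l') = endp e.2.2 (f :: l') := by
        obtain ⟨x, hx⟩ : ∃ x, (f :: l').getLast? = some x := by
          cases hgl : (f :: l').getLast? with
          | none => exact absurd hgl (by simp)
          | some x => exact ⟨x, rfl⟩
        show (match (e :: f :: l').getLast? with | none => u | some x => x.2.2) =
          (match (f :: l').getLast? with | none => e.2.2 | some x => x.2.2)
        rw [List.getLast?_cons_cons, hx]
      rw [h2]
      exact ih e.2.2 v hrest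

lemma finpath_snoc {V : Type*} {E : Set (V × ℕ × V)} {u v : V} {l : List (V × ℕ × V)}
    (h : IsFinPath E u l v) {e : V × ℕ × V} (he : e ∈ E) (h1 : e.1 = v) :
    IsFinPath E u (l ++ [e]) e.2.2 := by
  induction l generalizing u with
  | nil => exact ⟨he, by rw [h1, ← h], rfl⟩
  | cons f l ih =>
    obtain ⟨hf, hf1, hrest⟩ := h
    exact ⟨hf, hf1, ih hrest⟩

lemma endp_play {V : Type*} (v0 : V) (w : ℕ → V × ℕ × V) (h0 : (w 0).1 = v0)
    (hlink : ∀ k, (w k).2.2 = (w (k+1)).1) :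
    ∀ k, endp v0 ((List.range k).map w) = (w k).1 := by
  intro k
  cases k with
  | zero => exact h0.symm
  | succ k =>
    rw [List.range_succ, List.map_append]
    show endp v0 (_ ++ [w k]) = _
    rw [endp_concat]
    exact hlink k

/-- Playing an Even strategy against an Odd strategy produces a play consistent
with both. -/
lemma battle {V : Type*} (g : PGame V) (str ostr : List (V × ℕ × V) → V × ℕ × V)
    (h1 : ∀ l v, IsFinPath g.edges g.start l v → g.evenOwn v → str l ∈ g.edges ∧ (str l).1 = v)
    (h2 : ∀ l v, IsFinPath g.edges g.start l v → ¬ g.evenOwn v →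
      ostr l ∈ g.edges ∧ (ostr l).1 = v) :
    ∃ w, g.IsPlay w ∧ (∀ k, g.evenOwn ((w k).1) → w k = str ((List.range k).map w)) ∧
      (∀ k, ¬ g.evenOwn ((w k).1) → w k = ostr ((List.range k).map w)) := by
  classical
  set nxt : List (V × ℕ × V) → V × ℕ × V := fun l =>
    if g.evenOwn (endp g.start l) then str l else ostr l with hnxtdef
  set hist : ℕ → List (V × ℕ × V) :=
    fun k => Nat.rec [] (fun _ l => l ++ [nxt l]) k with hhistdef
  have hist_succ : ∀ k, hist (k+1) = hist k ++ [nxt (hist k)] := fun k => rfl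
  have hinv : ∀ k, IsFinPath g.edges g.start (hist k) (endp g.start (hist k)) := by
    intro k
    induction k with
    | zero => rfl
    | succ k ih =>
      have hnxt : nxt (hist k) ∈ g.edges ∧ (nxt (hist k)).1 = endp g.start (hist k) := by
        by_cases h : g.evenOwn (endp g.start (hist k))
        · have := h1 (hist k) _ ih h
          simp only [hnxtdef, if_pos h]
          exact this
        · have := h2 (hist k) _ ih h
          simp only [hnxtdef, if_neg h]
          exact this
      rw [hist_succ, endp_concat]
      exact finpath_snoc ih hnxt.1 hnxt.2
  have hnxtspec : ∀ k, nxt (hist k) ∈ g.edges ∧ (nxt (hist k)).1 = endp g.start (hist k) := by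
    intro k
    by_cases h : g.evenOwn (endp g.start (hist k))
    · have := h1 (hist k) _ (hinv k) h
      simp only [hnxtdef, if_pos h]
      exact this
    · have := h2 (hist k) _ (hinv k) h
      simp only [hnxtdef, if_neg h]
      exact this
  set w : ℕ → V × ℕ × V := fun k => nxt (hist k) with hwdef
  have hw0 : (w 0).1 = g.start := (hnxtspec 0).2
  have hlink : ∀ k, (w k).2.2 = (w (k+1)).1 := by
    intro k
    have h := (hnxtspec (k+1)).2
    rw [hist_succ, endp_concat] at h
    exact h.symm
  have hhist : ∀ k, hist k = (List.range k).map w := by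
    intro k
    induction k with
    | zero => rfl
    | succ k ih =>
      rw [hist_succ k, List.range_succ, List.map_append, ← ih]
      rfl
  refine ⟨w, ⟨hw0, fun k => ⟨(hnxtspec k).1, hlink k⟩⟩, ?_, ?_⟩
  · intro k hk
    have he : (w k).1 = endp g.start (hist k) := (hnxtspec k).2
    rw [he] at hk
    show nxt (hist k) = _
    rw [hnxtdef]
    simp only [if_pos hk]
    rw [hhist k]
  · intro k hk
    have he : (w k).1 = endp g.start (hist k) := (hnxtspec k).2
    rw [he] at hk
    show nxt (hist k) = _
    rw [hnxtdef]
    simp only [if_neg hk]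
    rw [hhist k]

lemma finpath_node_mem {n d : ℕ} (G : GameGraph n d) :
    ∀ (l : List Letter) (u v : ℕ), u ∈ Set.Icc 1 n → IsFinPath G.edges u l v →
      v ∈ Set.Icc 1 n := by
  intro l
  induction l with
  | nil => intro u v hu h; exact h ▸ hu
  | cons e l ih =>
    intro u v hu h
    obtain ⟨he, _, hrest⟩ := h
    have ha := G.edges_alph e he
    exact ih e.2.2 v ⟨ha.2.2.2.2.1, ha.2.2.2.2.2⟩ hrest

/-- Positional determinacy applied to a game graph. -/
theorem gamegraph_posdet {n d : ℕ} (G : GameGraph n d) :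
    (∃ τ : EPosStrat G, EWinningPos τ ∧ EvenWins G.toPGame) ∨
    (∃ τ : OPosStrat G, OWinningPos τ ∧ ¬ EvenWins G.toPGame) := by
  classical
  set own : ℕ → Bool := fun v => decide (v ∈ G.evenN) with hown
  have hownT : ∀ v, own v = true ↔ v ∈ G.evenN := by
    intro v; simp [hown]
  have hownF : ∀ v, own v = false ↔ v ∉ G.evenN := by
    intro v; simp [hown]
  have hS : Set.Icc 1 n = G.evenN ∪ G.oddN := G.union_eq.symm
  have hE : ∀ e ∈ G.edges, e.1 ∈ Set.Icc (1:ℕ) n ∧ e.2.2 ∈ Set.Icc (1:ℕ) n ∧ prio e ≤ d := by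
    intro e he
    have h := G.edges_alph e he
    exact ⟨⟨h.1, h.2.1⟩, ⟨h.2.2.2.2.1, h.2.2.2.2.2⟩, h.2.2.2.1⟩
  obtain ⟨W, σ, hzc⟩ := zielonka own d (Set.Icc 1 n) (Set.finite_Icc 1 n) G.edges hE G.total
  have hstart : G.start ∈ W true ∪ W false := hzc.1 G.start_mem
  by_cases hsT : G.start ∈ W true
  · -- Even wins
    left
    have hmemE : ∀ v ∈ G.evenN, σ true v ∈ G.edges ∧ (σ true v).1 = v := by
      intro v hv
      exact hzc.2.2.1 true v (by rw [hS]; exact Or.inl hv) ((hownT v).2 hv)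
    refine ⟨⟨σ true, hmemE⟩, ?_, ?_⟩
    · intro w hw
      have hcons : ConsW own true (σ true) w := fun k hk => hw.2 k ((hownT _).1 hk)
      have hwin := hzc.2.2.2 true w hw.1.2 hcons (by rw [hw.1.1]; exact hsT)
      exact (winsP_true_iff _).1 hwin
    · refine ⟨fun l => σ true (endp G.start l), ?_, ?_⟩
      · intro l v hpath hvE
        have hend : endp G.start l = v := endp_finpath l _ _ hpath
        show σ true (endp G.start l) ∈ G.edges ∧ (σ true (endp G.start l)).1 = v
        rw [hend]
        exact hmemE v hvE
      · intro w hw hcons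
        have harises : ∀ k, (w k).1 ∈ G.evenN → w k = σ true ((w k).1) := by
          intro k hk
          have h : w k = σ true (endp G.start ((List.range k).map w)) := hcons k hk
          rwa [endp_play G.start w hw.1 (fun k => (hw.2 k).2) k] at h
        have hwin := hzc.2.2.2 true w hw.2 (fun k hk => harises k ((hownT _).1 hk))
          (by rw [hw.1]; exact hsT)
        exact (winsP_true_iff _).1 hwin
  · -- Odd wins
    have hsF : G.start ∈ W false := hstart.resolve_left hsT
    right
    have hmemO : ∀ v ∈ G.oddN, σ false v ∈ G.edges ∧ (σ false v).1 = v := by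
      intro v hv
      refine hzc.2.2.1 false v (by rw [hS]; exact Or.inr hv) ?_
      exact (hownF v).2 (fun h => Set.disjoint_left.1 G.disj h hv)
    refine ⟨⟨σ false, hmemO⟩, ?_, ?_⟩
    · intro w hw hLE
      have hcons : ConsW own false (σ false) w := by
        intro k hk
        have hkS : (w k).1 ∈ Set.Icc 1 n := (hE _ (hw.1.2 k).1).1
        have hnotE : (w k).1 ∉ G.evenN := (hownF _).1 hk
        have hO : (w k).1 ∈ G.oddN := by
          rw [hS] at hkS; exact hkS.resolve_left hnotE
        exact hw.2 k hO
      have hwin := hzc.2.2.2 false w hw.1.2 hcons (by rw [hw.1.1]; exact hsF)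
      exact maxInfOft_not_both hLE ((winsP_false_iff _).1 hwin)
    · rintro ⟨str, hstr1, hstr2⟩
      obtain ⟨w, hwp, hce, hco⟩ := battle G.toPGame str (fun l => σ false (endp G.start l))
        hstr1 (by
          intro l v hpath hvO
          have hend : endp G.start l = v := endp_finpath l _ _ hpath
          have hvIcc : v ∈ Set.Icc 1 n := finpath_node_mem G l G.start v G.start_mem hpath
          have hvodd : v ∈ G.oddN := by
            rw [hS] at hvIcc; exact hvIcc.resolve_left hvO
          show σ false (endp G.start l) ∈ G.edges ∧ (σ false (endp G.start l)).1 = v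
          rw [hend]
          exact hmemO v hvodd)
      have hEvenWin : MaxInfOftEven fun k => (w k).2.1 := hstr2 w hwp hce
      have hcons : ConsW own false (σ false) w := by
        intro k hk
        have hnotE : ¬ G.toPGame.evenOwn ((w k).1) := (hownF _).1 hk
        have h : w k = σ false (endp G.start ((List.range k).map w)) := hco k hnotE
        rwa [endp_play G.start w hwp.1 (fun k => (hwp.2 k).2) k] at h
      have hwin := hzc.2.2.2 false w hwp.2 hcons (by rw [hwp.1]; exact hsF)
      exact maxInfOft_not_both hEvenWin ((winsP_false_iff _).1 hwin)

section ProductLemmas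

variable {n d : ℕ} (G : GameGraph n d) {Q : Type} (A : Automaton Q)

lemma prod_edge_src_inl {ed : ((ℕ ⊕ Letter) × Q) × ℕ × ((ℕ ⊕ Letter) × Q)}
    (hed : ed ∈ (prodGame G A).edges) {v : ℕ} {s : Q} (h : ed.1 = (Sum.inl v, s)) :
    ∃ e ∈ G.edges, e.1 = v ∧ ed = ((Sum.inl v, s), 1, (Sum.inr e, s)) := by
  rcases hed with ⟨e, he, s', hform⟩ | ⟨t, ht, hte, hform⟩
  · subst hform
    simp only [Prod.mk.injEq, Sum.inl.injEq] at h
    obtain ⟨h1, h2⟩ := h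
    subst h1; subst h2
    exact ⟨e, he, rfl, rfl⟩
  · subst hform
    simp only [Prod.mk.injEq] at h
    exact absurd h.1 (by simp)

lemma prod_edge_src_inr {ed : ((ℕ ⊕ Letter) × Q) × ℕ × ((ℕ ⊕ Letter) × Q)}
    (hed : ed ∈ (prodGame G A).edges) {e : Letter} {s : Q} (h : ed.1 = (Sum.inr e, s)) :
    ∃ t ∈ A.trans, tLetter t = e ∧ tSrc t = s ∧ e ∈ G.edges ∧
      ed = ((Sum.inr e, s), tPrio t, (Sum.inl e.2.2, tTgt t)) := by
  rcases hed with ⟨e', he', s', hform⟩ | ⟨t, ht, hte, hform⟩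
  · subst hform
    simp only [Prod.mk.injEq] at h
    exact absurd h.1 (by simp)
  · subst hform
    simp only [Prod.mk.injEq, Sum.inr.injEq] at h
    obtain ⟨h1, h2⟩ := h
    subst h1; subst h2
    exact ⟨t, ht, rfl, rfl, hte, rfl⟩

lemma prod_play_decomp (Wp : ℕ → ((ℕ ⊕ Letter) × Q) × ℕ × ((ℕ ⊕ Letter) × Q))
    (hW : (prodGame G A).IsPlay Wp) :
    ∃ (e : ℕ → Letter) (t : ℕ → Trans Q),
      (∀ k, e k ∈ G.edges ∧ t k ∈ A.trans ∧ tLetter (t k) = e k ∧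
        Wp (2*k) = ((Sum.inl (e k).1, tSrc (t k)), 1, (Sum.inr (e k), tSrc (t k))) ∧
        Wp (2*k+1) =
          ((Sum.inr (e k), tSrc (t k)), tPrio (t k), (Sum.inl (e k).2.2, tTgt (t k)))) ∧
      (e 0).1 = G.start ∧ tSrc (t 0) = A.init ∧
      (∀ k, (e k).2.2 = (e (k+1)).1 ∧ tTgt (t k) = tSrc (t (k+1))) := by
  have hsrc : ∀ k, ∃ v s, (Wp (2*k)).1 = (Sum.inl v, s) := by
    intro k
    induction k with
    | zero => exact ⟨G.start, A.init, hW.1⟩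
    | succ k ih =>
      obtain ⟨v, s, hvs⟩ := ih
      obtain ⟨e, he, he1, hform⟩ := prod_edge_src_inl G A (hW.2 (2*k)).1 hvs
      have h2 : (Wp (2*k+1)).1 = (Sum.inr e, s) := by
        rw [← (hW.2 (2*k)).2, hform]
      obtain ⟨t, ht, hte, hts, heE, hform2⟩ := prod_edge_src_inr G A (hW.2 (2*k+1)).1 h2
      refine ⟨e.2.2, tTgt t, ?_⟩
      have harith : 2*(k+1) = 2*k+1+1 := by ring
      rw [harith, ← (hW.2 (2*k+1)).2, hform2]
  have hphi : ∀ k, ∃ (ek : Letter) (tk : Trans Q), ek ∈ G.edges ∧ tk ∈ A.trans ∧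
      tLetter tk = ek ∧
      Wp (2*k) = ((Sum.inl ek.1, tSrc tk), 1, (Sum.inr ek, tSrc tk)) ∧
      Wp (2*k+1) = ((Sum.inr ek, tSrc tk), tPrio tk, (Sum.inl ek.2.2, tTgt tk)) := by
    intro k
    obtain ⟨v, s, hvs⟩ := hsrc k
    obtain ⟨e, he, he1, hform⟩ := prod_edge_src_inl G A (hW.2 (2*k)).1 hvs
    have h2 : (Wp (2*k+1)).1 = (Sum.inr e, s) := by
      rw [← (hW.2 (2*k)).2, hform]
    obtain ⟨t, ht, hte, hts, heE, hform2⟩ := prod_edge_src_inr G A (hW.2 (2*k+1)).1 h2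
    refine ⟨e, t, he, ht, hte, ?_, ?_⟩
    · rw [hform, he1, hts]
    · rw [hform2, hts]
  choose e t h using hphi
  have he0 : Wp 0 = ((Sum.inl (e 0).1, tSrc (t 0)), 1, (Sum.inr (e 0), tSrc (t 0))) := by
    have h00 := (h 0).2.2.2.1
    simpa using h00
  have h0 : (Wp 0).1 = (Sum.inl G.start, A.init) := hW.1
  rw [he0] at h0
  simp only [Prod.mk.injEq, Sum.inl.injEq] at h0
  refine ⟨e, t, h, h0.1, h0.2, ?_⟩
  intro k
  have ha := (h k).2.2.2.2
  have hb := (h (k+1)).2.2.2.1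
  have harith : 2*(k+1) = 2*k+1+1 := by ring
  rw [harith] at hb
  have hl := (hW.2 (2*k+1)).2
  rw [ha, hb] at hl
  simp only [Prod.mk.injEq, Sum.inl.injEq] at hl
  exact hl

lemma prod_finpath_shape :
    ∀ (l : List (((ℕ ⊕ Letter) × Q) × ℕ × ((ℕ ⊕ Letter) × Q))) (x y : (ℕ ⊕ Letter) × Q),
      ((∃ u s, x = (Sum.inl u, s) ∧ u ∈ Set.Icc 1 n) ∨
        (∃ e s, x = (Sum.inr e, s) ∧ e ∈ G.edges)) →
      IsFinPath (prodGame G A).edges x l y →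
      ((∃ u s, y = (Sum.inl u, s) ∧ u ∈ Set.Icc 1 n) ∨
        (∃ e s, y = (Sum.inr e, s) ∧ e ∈ G.edges)) := by
  intro l
  induction l with
  | nil => intro x y hx h; exact h ▸ hx
  | cons ed l ih =>
    intro x y hx h
    obtain ⟨hedE, hed1, hrest⟩ := h
    refine ih ed.2.2 y ?_ hrest
    rcases hedE with ⟨e, he, s', hform⟩ | ⟨t, ht, hte, hform⟩
    · right
      exact ⟨e, s', by rw [hform], he⟩
    · left
      refine ⟨(tLetter t).2.2, tTgt t, by rw [hform], ?_⟩
      have ha := G.edges_alph _ hte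
      exact ⟨ha.2.2.2.2.1, ha.2.2.2.2.2⟩

lemma det_run_unique (n d : ℕ)
    (hdet : ∀ (s : Q) (e : Letter), InAlph n d e →
      ∃! t : Trans Q, t ∈ A.trans ∧ tSrc t = s ∧ tLetter t = e)
    (w : Word) (hw : ∀ k, InAlph n d (w k)) (ρ ρ' : ℕ → Trans Q)
    (h1 : IsRun A ρ) (h2 : IsRun A ρ') (r1 : Reads ρ w) (r2 : Reads ρ' w) :
    ∀ k, ρ k = ρ' k := by
  have key : ∀ k, ρ k = ρ' k ∧ tSrc (ρ k) = tSrc (ρ' k) := by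
    intro k
    induction k with
    | zero =>
      have hs : tSrc (ρ 0) = tSrc (ρ' 0) := by rw [h1.1, h2.1]
      exact ⟨(hdet (tSrc (ρ 0)) (w 0) (hw 0)).unique ⟨(h1.2 0).1, rfl, r1 0⟩
        ⟨(h2.2 0).1, hs.symm, r2 0⟩, hs⟩
    | succ k ih =>
      have hs : tSrc (ρ (k+1)) = tSrc (ρ' (k+1)) := by
        rw [← (h1.2 k).2, ← (h2.2 k).2, ih.1]
      exact ⟨(hdet (tSrc (ρ (k+1))) (w (k+1)) (hw (k+1))).unique
        ⟨(h1.2 (k+1)).1, rfl, r1 (k+1)⟩ ⟨(h2.2 (k+1)).1, hs.symm, r2 (k+1)⟩, hs⟩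
  exact fun k => (key k).1

lemma prod_prio_equiv (Wp : ℕ → ((ℕ ⊕ Letter) × Q) × ℕ × ((ℕ ⊕ Letter) × Q))
    (t : ℕ → Trans Q)
    (h1 : ∀ k, (Wp (2*k)).2.1 = 1) (h2 : ∀ k, (Wp (2*k+1)).2.1 = tPrio (t k))
    (hge : ∀ k, 1 ≤ tPrio (t k)) :
    ((MaxInfOftEven fun k => tPrio (t k)) ↔ (MaxInfOftEven fun k => (Wp k).2.1)) := by
  constructor
  · rintro ⟨p, hev, hio, hbd⟩
    have hp1 : 1 ≤ p := by
      obtain ⟨k, _, hk⟩ := hio 0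
      have hk' : tPrio (t k) = p := hk
      have := hge k
      omega
    have hp2 : 2 ≤ p := by
      obtain ⟨r, hr⟩ := hev
      omega
    refine ⟨p, hev, ?_, ?_⟩
    · intro N
      obtain ⟨k, hkN, hk⟩ := hio N
      have hk' : tPrio (t k) = p := hk
      refine ⟨2*k+1, by omega, ?_⟩
      show (Wp (2*k+1)).2.1 = p
      rw [h2 k]; exact hk'
    · intro q hq
      by_cases hq' : InfOft (fun k => tPrio (t k)) q
      · exact hbd q hq'
      · simp only [InfOft] at hq'
        push_neg at hq'
        obtain ⟨N, hN⟩ := hq'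
        obtain ⟨m, hm, hmq⟩ := hq (2*N+2)
        have hmq' : (Wp m).2.1 = q := hmq
        rcases Nat.even_or_odd m with ⟨r, hr⟩ | ⟨r, hr⟩
        · have hm2 : m = 2*r := by omega
          rw [hm2, h1 r] at hmq'
          omega
        · have hrN : N ≤ r := by omega
          have hm2 : m = 2*r+1 := by omega
          rw [hm2, h2 r] at hmq'
          exact absurd hmq' (hN r hrN)
  · rintro ⟨p, hev, hio, hbd⟩
    have hone : InfOft (fun k => (Wp k).2.1) 1 := by
      intro N
      refine ⟨2*N, by omega, ?_⟩
      show (Wp (2*N)).2.1 = 1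
      exact h1 N
    have hp1 : 1 ≤ p := hbd 1 hone
    have hp2 : 2 ≤ p := by
      obtain ⟨r, hr⟩ := hev
      omega
    refine ⟨p, hev, ?_, ?_⟩
    · intro N
      obtain ⟨m, hm, hmq⟩ := hio (2*N+1)
      have hmq' : (Wp m).2.1 = p := hmq
      rcases Nat.even_or_odd m with ⟨r, hr⟩ | ⟨r, hr⟩
      · exfalso
        have hm2 : m = 2*r := by omega
        rw [hm2, h1 r] at hmq'
        omega
      · have hm2 : m = 2*r+1 := by omega
        refine ⟨r, by omega, ?_⟩
        show tPrio (t r) = p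
        rw [hm2, h2 r] at hmq'
        exact hmq'
    · intro q hq
      refine hbd q ?_
      intro N
      obtain ⟨k, hkN, hk⟩ := hq N
      have hk' : tPrio (t k) = q := hk
      refine ⟨2*k+1, by omega, ?_⟩
      show (Wp (2*k+1)).2.1 = q
      rw [h2 k]; exact hk'

end ProductLemmas

end PosDet

/-- If `A` is a deterministic PG separator, then Even has a
winning strategy in `G` iff she has a winning strategy in the synchronized product
`G × A`. -/
theorem deterministic_separator_product_equiv (n d : ℕ) (hn : 1 ≤ n) (hd : 1 ≤ d)
    (G : GameGraph n d) {Q : Type} [Finite Q] (A : Automaton Q) (d' : ℕ)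
    (hA : IsParityAutomaton n d d' A) (hSep : PGSeparator n d A)
    (hdet : ∀ (s : Q) (e : Letter), InAlph n d e →
      ∃! t : Trans Q, t ∈ A.trans ∧ tSrc t = s ∧ tLetter t = e) :
    EvenWins G.toPGame ↔ EvenWins (prodGame G A) := by
  classical
  obtain ⟨hsep1, hsep2⟩ := hSep
  have htrex : ∀ (s : Q) (e : Letter), InAlph n d e →
      ∃ t : Trans Q, t ∈ A.trans ∧ tSrc t = s ∧ tLetter t = e := fun s e h => (hdet s e h).exists
  set tr : Q → Letter → Trans Q := fun s e =>
    if h : InAlph n d e then (htrex s e h).choose else (s, e, 1, s) with htrdef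
  have htr1 : ∀ (s : Q) (e : Letter), InAlph n d e →
      tr s e ∈ A.trans ∧ tSrc (tr s e) = s ∧ tLetter (tr s e) = e := by
    intro s e h
    simp only [htrdef, dif_pos h]
    exact (htrex s e h).choose_spec
  set pstart : (ℕ ⊕ Letter) × Q := (Sum.inl G.start, A.init) with hpstartdef
  have hpshape : (∃ u s, pstart = ((Sum.inl u : ℕ ⊕ Letter), s) ∧ u ∈ Set.Icc 1 n) ∨
      (∃ e s, pstart = ((Sum.inr e : ℕ ⊕ Letter), s) ∧ e ∈ G.edges) :=
    Or.inl ⟨G.start, A.init, rfl, G.start_mem⟩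
  rcases gamegraph_posdet G with ⟨τ, hτwin, hGEwin⟩ | ⟨τ, hτwin, hGnEwin⟩
  · -- Even wins G
    refine ⟨fun _ => ?_, fun _ => hGEwin⟩
    set PSTR : List (((ℕ ⊕ Letter) × Q) × ℕ × ((ℕ ⊕ Letter) × Q)) →
        ((ℕ ⊕ Letter) × Q) × ℕ × ((ℕ ⊕ Letter) × Q) := fun l =>
      (fun x : (ℕ ⊕ Letter) × Q => Sum.casesOn x.1
        (fun v => (((Sum.inl v : ℕ ⊕ Letter), x.2), 1, ((Sum.inr (τ.choice v) : ℕ ⊕ Letter), x.2)))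
        (fun e => (((Sum.inr e : ℕ ⊕ Letter), x.2), tPrio (tr x.2 e),
          ((Sum.inl e.2.2 : ℕ ⊕ Letter), tTgt (tr x.2 e))))) (endp pstart l) with hPSTRdef
    have hPSTRl : ∀ l (v : ℕ) (s : Q), endp pstart l = (Sum.inl v, s) →
        PSTR l = ((Sum.inl v, s), 1, (Sum.inr (τ.choice v), s)) := by
      intro l v s h
      simp only [hPSTRdef]
      rw [h]
    have hPSTRr : ∀ l (e : Letter) (s : Q), endp pstart l = (Sum.inr e, s) →
        PSTR l = ((Sum.inr e, s), tPrio (tr s e), (Sum.inl e.2.2, tTgt (tr s e))) := by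
      intro l e s h
      simp only [hPSTRdef]
      rw [h]
    refine ⟨PSTR, ?_, ?_⟩
    · -- validity on finite paths
      intro l v hpath hvE
      have hend : endp pstart l = v := endp_finpath l _ _ hpath
      have hshape := prod_finpath_shape G A l pstart v hpshape hpath
      rcases hshape with ⟨u, s, hv, hu⟩ | ⟨e, s, hv, he⟩
      · subst hv
        have huE : u ∈ G.evenN := hvE
        have hch := τ.mem u huE
        rw [hPSTRl l u s hend]
        refine ⟨Or.inl ⟨τ.choice u, hch.1, s, ?_⟩, rfl⟩
        rw [hch.2]
      · subst hv
        have hAl : InAlph n d e := G.edges_alph e he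
        rw [hPSTRr l e s hend]
        obtain ⟨ht1, ht2, ht3⟩ := htr1 s e hAl
        refine ⟨Or.inr ⟨tr s e, ht1, ?_, ?_⟩, rfl⟩
        · rw [ht3]; exact he
        · rw [ht2, ht3]
    · -- winning
      intro Wp hWp hconsp
      obtain ⟨e, t, hk, he0, ht0, hlink⟩ := prod_play_decomp G A Wp hWp
      have hword : ArisesE τ e := by
        refine ⟨⟨he0, fun k => ⟨(hk k).1, (hlink k).1⟩⟩, ?_⟩
        intro k hkE
        have hnode : (Wp (2*k)).1 = (Sum.inl (e k).1, tSrc (t k)) := by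
          rw [(hk k).2.2.2.1]
        have hown : (prodGame G A).evenOwn ((Wp (2*k)).1) := by
          rw [hnode]; exact hkE
        have hc := hconsp (2*k) hown
        have hendk : endp pstart ((List.range (2*k)).map Wp) =
            (Sum.inl (e k).1, tSrc (t k)) := by
          rw [endp_play pstart Wp hWp.1 (fun k => (hWp.2 k).2) (2*k)]
          exact hnode
        rw [hPSTRl _ _ _ hendk, (hk k).2.2.2.1] at hc
        simp only [Prod.mk.injEq, Sum.inr.injEq, Sum.inl.injEq, true_and, and_true] at hc
        exact hc
      have hwPos : e ∈ PosEven n d := ⟨G, τ, hτwin, hword⟩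
      obtain ⟨ρ, hρrun, hρreads, hρacc⟩ := hsep1 e hwPos
      have hrun : IsRun A t := ⟨ht0, fun k => ⟨(hk k).2.1, (hlink k).2⟩⟩
      have hreads : Reads t e := fun k => (hk k).2.2.1
      have halph : ∀ k, InAlph n d (e k) := fun k => G.edges_alph _ (hk k).1
      have huniq := det_run_unique A n d hdet e halph ρ t hρrun hrun hρreads hreads
      have hacc : MaxInfOftEven fun k => tPrio (t k) := by
        have heq : (fun k => tPrio (ρ k)) = fun k => tPrio (t k) := by
          funext k; rw [huniq k]
        rw [← heq]; exact hρacc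
      have h1 : ∀ k, (Wp (2*k)).2.1 = 1 := by intro k; rw [(hk k).2.2.2.1]
      have h2 : ∀ k, (Wp (2*k+1)).2.1 = tPrio (t k) := by intro k; rw [(hk k).2.2.2.2]
      have hge : ∀ k, 1 ≤ tPrio (t k) := fun k => (hA.1 (t k) (hk k).2.1).2.1
      exact (prod_prio_equiv Wp t h1 h2 hge).1 hacc
  · -- Odd wins G
    refine ⟨fun h => absurd h hGnEwin, fun hPW => absurd ?_ hGnEwin⟩
    exfalso
    obtain ⟨STR, hSTR1, hSTR2⟩ := hPW
    set OSTR : List (((ℕ ⊕ Letter) × Q) × ℕ × ((ℕ ⊕ Letter) × Q)) →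
        ((ℕ ⊕ Letter) × Q) × ℕ × ((ℕ ⊕ Letter) × Q) := fun l =>
      (fun x : (ℕ ⊕ Letter) × Q => Sum.casesOn x.1
        (fun v => (((Sum.inl v : ℕ ⊕ Letter), x.2), 1, ((Sum.inr (τ.choice v) : ℕ ⊕ Letter), x.2)))
        (fun e => (((Sum.inr e : ℕ ⊕ Letter), x.2), 1, ((Sum.inr e : ℕ ⊕ Letter), x.2))))
        (endp pstart l) with hOSTRdef
    have hOSTRl : ∀ l (v : ℕ) (s : Q), endp pstart l = (Sum.inl v, s) →
        OSTR l = ((Sum.inl v, s), 1, (Sum.inr (τ.choice v), s)) := by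
      intro l v s h
      simp only [hOSTRdef]
      rw [h]
    obtain ⟨Wp, hWp, hce, hco⟩ := battle (prodGame G A) STR OSTR hSTR1 (by
      intro l v hpath hvO
      have hend : endp pstart l = v := endp_finpath l _ _ hpath
      have hshape := prod_finpath_shape G A l pstart v hpshape hpath
      rcases hshape with ⟨u, s, hv, hu⟩ | ⟨e, s, hv, he⟩
      · subst hv
        have hnotE : u ∉ G.evenN := hvO
        have huO : u ∈ G.oddN := by
          rw [← G.union_eq] at hu
          exact hu.resolve_left hnotE
        have hch := τ.mem u huO
        rw [hOSTRl l u s hend]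
        refine ⟨Or.inl ⟨τ.choice u, hch.1, s, ?_⟩, rfl⟩
        rw [hch.2]
      · subst hv
        exact absurd trivial hvO)
    have hEvenW : MaxInfOftEven fun k => (Wp k).2.1 := hSTR2 Wp hWp hce
    obtain ⟨e, t, hk, he0, ht0, hlink⟩ := prod_play_decomp G A Wp hWp
    have hword : ArisesO τ e := by
      refine ⟨⟨he0, fun k => ⟨(hk k).1, (hlink k).1⟩⟩, ?_⟩
      intro k hkO
      have hnode : (Wp (2*k)).1 = (Sum.inl (e k).1, tSrc (t k)) := by
        rw [(hk k).2.2.2.1]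
      have hnotE : ¬ (prodGame G A).evenOwn ((Wp (2*k)).1) := by
        rw [hnode]
        exact fun h => Set.disjoint_left.1 G.disj h hkO
      have hc := hco (2*k) hnotE
      have hendk : endp pstart ((List.range (2*k)).map Wp) =
          (Sum.inl (e k).1, tSrc (t k)) := by
        rw [endp_play pstart Wp hWp.1 (fun k => (hWp.2 k).2) (2*k)]
        exact hnode
      rw [hOSTRl _ _ _ hendk, (hk k).2.2.2.1] at hc
      simp only [Prod.mk.injEq, Sum.inr.injEq, Sum.inl.injEq, true_and, and_true] at hc
      exact hc
    have hwPos : e ∈ PosOdd n d := ⟨G, τ, hτwin, hword⟩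
    have h1 : ∀ k, (Wp (2*k)).2.1 = 1 := by intro k; rw [(hk k).2.2.2.1]
    have h2 : ∀ k, (Wp (2*k+1)).2.1 = tPrio (t k) := by intro k; rw [(hk k).2.2.2.2]
    have hge : ∀ k, 1 ≤ tPrio (t k) := fun k => (hA.1 (t k) (hk k).2.1).2.1
    have hacc := (prod_prio_equiv Wp t h1 h2 hge).2 hEvenW
    exact hsep2 e hwPos ⟨t, ⟨ht0, fun k => ⟨(hk k).2.1, (hlink k).2⟩⟩,
      (fun k => (hk k).2.2.1), hacc⟩

end PGSep
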